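/- Let k, ℓ ≥ 2 be multiplicatively independent integers. If a finite system of strict linear homogeneous inequalities in two variables with rational coefficients has a solution (u,v) with u, v > 0 real, then it has infinitely many solutions (u,v) with u a power of k and v a power of ℓ. -/
import Mathlib

open Set

lemma hit_interval {g A B : ℝ} (hg : 0 < g) (hA : 0 ≤ A) (hAB : A + g < B) :
    ∃ j : ℕ, A < (j : ℝ) * g ∧ (j : ℝ) * g < B := by
  refine ⟨(⌊A / g⌋).toNat + 1, ?_, ?_⟩ <;>
  · have h0 : (0:ℤ) ≤ ⌊A / g⌋ := Int.floor_nonneg.2 (div_nonneg hA hg.le)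
    have h1 : A / g < (⌊A / g⌋ : ℝ) + 1 := Int.lt_floor_add_one _
    have h1' : (⌊A / g⌋ : ℝ) ≤ A / g := Int.floor_le _
    have h2 : (((⌊A / g⌋).toNat : ℝ)) = ((⌊A / g⌋ : ℝ)) := by
      exact_mod_cast congrArg (Int.cast : ℤ → ℝ) (Int.toNat_of_nonneg h0)
    have hgA : A = (A / g) * g := by field_simp
    push_cast [h2]
    nlinarith [mul_lt_mul_of_pos_right h1 hg, mul_le_mul_of_nonneg_right h1' hg.le]

-- density of ℤ + ℤα
lemma small_elt {α : ℝ} (hirr : Irrational α) (hα : 0 < α) {ε : ℝ} (hε : 0 < ε) :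
    ∃ m n : ℤ, 0 < (m : ℝ) + n * α ∧ (m : ℝ) + n * α < ε := by
  set S := AddSubgroup.closure ({1, α} : Set ℝ) with hS
  have hdense : Dense (S : Set ℝ) := by
    rcases S.dense_or_cyclic with h | ⟨a, ha⟩
    · exact h
    · exfalso
      have h1 : (1:ℝ) ∈ S := AddSubgroup.subset_closure (by simp)
      have h2 : α ∈ S := AddSubgroup.subset_closure (by simp)
      rw [ha, AddSubgroup.mem_closure_singleton] at h1 h2
      obtain ⟨n, hn⟩ := h1
      obtain ⟨m, hm⟩ := h2
      have hn0 : (n : ℝ) ≠ 0 := by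
        intro h
        rw [zsmul_eq_mul, h, zero_mul] at hn; exact one_ne_zero hn.symm
      have ha0 : a = 1 / n := by
        rw [zsmul_eq_mul] at hn; field_simp; linarith [hn]
      apply hirr
      refine ⟨(m : ℚ) / (n : ℚ), ?_⟩
      rw [zsmul_eq_mul, ha0] at hm
      push_cast
      rw [← hm]; ring
  obtain ⟨g, hgS, hg⟩ := hdense.exists_mem_open isOpen_Ioo
    (⟨ε/2, by constructor <;> linarith⟩ : (Ioo (0:ℝ) ε).Nonempty)
  rw [SetLike.mem_coe, AddSubgroup.mem_closure_pair] at hgS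
  obtain ⟨m, n, hmn⟩ := hgS
  exact ⟨m, n, by rw [zsmul_eq_mul, zsmul_eq_mul, mul_one] at hmn; rw [hmn]; exact hg.1,
    by rw [zsmul_eq_mul, zsmul_eq_mul, mul_one] at hmn; rw [hmn]; exact hg.2⟩

lemma key_lemma {α : ℝ} (hirr : Irrational α) (hα : 0 < α) {A B : ℝ} (hAB : A < B) (N : ℕ) :
    ∃ s t : ℕ, N < t ∧ A < (t : ℝ) * α - s ∧ (t : ℝ) * α - s < B := by
  have hε : (0:ℝ) < min (min (B - A) α) (1/2) := by
    apply lt_min (lt_min (by linarith) hα); norm_num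
  obtain ⟨m, n, hg0, hgε⟩ := small_elt hirr hα hε
  set g : ℝ := (m : ℝ) + n * α with hgdef
  have hgBA : g < B - A := lt_of_lt_of_le hgε (le_trans (min_le_left _ _) (min_le_left _ _))
  have hgα : g < α := lt_of_lt_of_le hgε (le_trans (min_le_left _ _) (min_le_right _ _))
  have hghalf : g < 1/2 := lt_of_lt_of_le hgε (min_le_right _ _)
  have hn0 : n ≠ 0 := by
    intro h
    rw [h] at hgdef
    push_cast at hgdef
    have h1 : (0:ℝ) < m := by rw [hgdef] at hg0; linarith
    have h2 : (m:ℝ) < 1 := by rw [hgdef] at hghalf; linarith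
    have h1' : 0 < m := by exact_mod_cast h1
    have h2' : m < 1 := by exact_mod_cast h2
    omega
  rcases lt_or_gt_of_ne hn0 with hneg | hpos
  · -- n < 0 case
    have hn'1 : (1:ℝ) ≤ -(n:ℝ) := by
      have : (1:ℤ) ≤ -n := by omega
      exact_mod_cast this
    have hm1 : (1:ℝ) ≤ m := by
      have hna : α ≤ -(n:ℝ) * α := by nlinarith
      have h0 : (0:ℝ) < m := by nlinarith
      have h0' : 0 < m := by exact_mod_cast h0
      have : (1:ℤ) ≤ m := h0'
      exact_mod_cast this
    set M : ℕ := ⌈2 * |B| + N + 1⌉₊ with hM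
    have hMr : 2 * |B| + (N:ℝ) + 1 ≤ M := Nat.le_ceil _
    have hBabs : B ≤ |B| := le_abs_self B
    have hBabs' : -|B| ≤ B := neg_abs_le B
    obtain ⟨j, hj1, hj2⟩ := hit_interval (A := M - B) (B := M - A) hg0 (by linarith)
      (by linarith)
    have hj0' : (0:ℝ) ≤ j := Nat.cast_nonneg j
    have hjbig : 2 * ((M:ℝ) - B) < j := by nlinarith
    have hNj : (N:ℝ) < j := by nlinarith
    have hsZnn : (0:ℝ) ≤ (j : ℝ) * m - M := by nlinarith
    have hsZ : (0:ℤ) ≤ (j : ℤ) * m - M := by exact_mod_cast hsZnn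
    have hn'R : (((-n).toNat : ℕ) : ℝ) = -(n:ℝ) := by
      have h := Int.toNat_of_nonneg (show (0:ℤ) ≤ -n by omega)
      exact_mod_cast congrArg (Int.cast : ℤ → ℝ) h
    have hsR : ((((j : ℤ) * m - M).toNat : ℕ) : ℝ) = (j:ℝ) * m - M := by
      have h := Int.toNat_of_nonneg hsZ
      exact_mod_cast congrArg (Int.cast : ℤ → ℝ) h
    have hval : ((j * (-n).toNat : ℕ) : ℝ) * α - ((((j : ℤ) * m - M).toNat : ℕ) : ℝ)
        = M - j * g := by
      push_cast [hn'R, hsR]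
      rw [hgdef]; ring
    refine ⟨((j : ℤ) * m - M).toNat, j * (-n).toNat, ?_, ?_, ?_⟩
    · have h1 : (j:ℝ) * 1 ≤ (j:ℝ) * (-(n:ℝ)) := mul_le_mul_of_nonneg_left hn'1 hj0'
      have ht : (N:ℝ) < ((j * (-n).toNat : ℕ) : ℝ) := by push_cast [hn'R]; linarith
      exact_mod_cast ht
    · rw [hval]; linarith
    · rw [hval]; linarith
  · -- n > 0 case
    have hn1 : (1:ℝ) ≤ (n:ℝ) := by exact_mod_cast hpos
    have hmneg : (m:ℝ) ≤ -1 := by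
      have hna : α ≤ (n:ℝ) * α := by nlinarith
      have h0 : (m:ℝ) < 0 := by nlinarith
      have h0' : m < 0 := by exact_mod_cast h0
      have : m ≤ -1 := by omega
      exact_mod_cast this
    have hmZ : m ≤ -1 := by exact_mod_cast hmneg
    set M : ℕ := ⌈|A| + N * g + 1⌉₊ with hM
    have hMr : |A| + (N:ℝ) * g + 1 ≤ M := Nat.le_ceil _
    have hAabs : -|A| ≤ A := neg_abs_le A
    have hNg : 0 ≤ (N:ℝ) * g := by positivity
    obtain ⟨j, hj1, hj2⟩ := hit_interval (A := A + M) (B := B + M) hg0 (by linarith)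
      (by linarith)
    have hj0' : (0:ℝ) ≤ j := Nat.cast_nonneg j
    have hNj : (N:ℝ) < j := by
      have h : (N:ℝ) * g < j * g := by linarith
      exact lt_of_mul_lt_mul_right h hg0.le
    have hnR : ((n.toNat : ℕ) : ℝ) = (n:ℝ) := by
      have h := Int.toNat_of_nonneg (show (0:ℤ) ≤ n by omega)
      exact_mod_cast congrArg (Int.cast : ℤ → ℝ) h
    have hmR : (((-m).toNat : ℕ) : ℝ) = -(m:ℝ) := by
      have h := Int.toNat_of_nonneg (show (0:ℤ) ≤ -m by omega)
      exact_mod_cast congrArg (Int.cast : ℤ → ℝ) h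
    have hval : ((j * n.toNat : ℕ) : ℝ) * α - ((j * (-m).toNat + M : ℕ) : ℝ)
        = j * g - M := by
      push_cast [hnR, hmR]
      rw [hgdef]; ring
    refine ⟨j * (-m).toNat + M, j * n.toNat, ?_, ?_, ?_⟩
    · have h1 : (j:ℝ) * 1 ≤ (j:ℝ) * (n:ℝ) := mul_le_mul_of_nonneg_left hn1 hj0'
      have ht : (N:ℝ) < ((j * n.toNat : ℕ) : ℝ) := by push_cast [hnR]; linarith
      exact_mod_cast ht
    · rw [hval]; linarith
    · rw [hval]; linarith


/-- If a finite system of strict linear homogeneous inequalities with rational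
coefficients in two variables has a positive real solution, then it has infinitely
many solutions with the first variable a power of `k` and the second a power of `ℓ`,
where `k, ℓ ≥ 2` are multiplicatively independent. -/
theorem infinitely_many_power_solutions (k l : ℕ) (hk : 2 ≤ k) (hl : 2 ≤ l)
    (hmi : ∀ s t : ℕ, k ^ s = l ^ t → s = 0 ∧ t = 0)
    (S : Finset (ℚ × ℚ))
    (hsol : ∃ u v : ℝ, 0 < u ∧ 0 < v ∧
      ∀ p ∈ S, (p.1 : ℝ) * u + (p.2 : ℝ) * v > 0) :
    {uv : ℝ × ℝ | (∃ s : ℕ, uv.1 = (k : ℝ) ^ s) ∧ (∃ t : ℕ, uv.2 = (l : ℝ) ^ t) ∧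
      ∀ p ∈ S, (p.1 : ℝ) * uv.1 + (p.2 : ℝ) * uv.2 > 0}.Infinite := by
  obtain ⟨u, v, hu, hv, husol⟩ := hsol
  have hk1 : (1:ℝ) < (k:ℝ) := by exact_mod_cast (by omega : 1 < k)
  have hl1 : (1:ℝ) < (l:ℝ) := by exact_mod_cast (by omega : 1 < l)
  have hk0 : (0:ℝ) < (k:ℝ) := by linarith
  have hl0 : (0:ℝ) < (l:ℝ) := by linarith
  set logk := Real.log k with hlogk_def
  set logl := Real.log l with hlogl_def
  have hlogk : 0 < logk := Real.log_pos hk1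
  have hlogl : 0 < logl := Real.log_pos hl1
  set α := logl / logk with hα_def
  have hα : 0 < α := div_pos hlogl hlogk
  -- irrationality of α
  have hirr : Irrational α := by
    rw [Irrational]
    rintro ⟨q, hq⟩
    have hq0 : 0 < (q:ℝ) := by rw [hq]; exact hα
    have hq0' : 0 < q := by exact_mod_cast hq0
    have hnum : 0 < q.num := Rat.num_pos.mpr hq0'
    have hden : 0 < (q.den : ℝ) := by exact_mod_cast q.pos
    have hqval : (q:ℝ) = (q.num : ℝ) / (q.den : ℝ) := by
      rw [Rat.cast_def]
    have hmul : (q.den : ℝ) * logl = (q.num : ℝ) * logk := by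
      have h1 : (q:ℝ) * logk = logl := by
        rw [hq, hα_def]; field_simp
      rw [hqval] at h1
      field_simp at h1
      linarith [h1]
    have hnumR : ((q.num.toNat : ℕ) : ℝ) = (q.num : ℝ) := by
      have h := Int.toNat_of_nonneg hnum.le
      exact_mod_cast congrArg (Int.cast : ℤ → ℝ) h
    have hlogeq : Real.log ((l:ℝ) ^ q.den) = Real.log ((k:ℝ) ^ q.num.toNat) := by
      rw [Real.log_pow, Real.log_pow, hnumR]
      push_cast
      rw [← hlogl_def, ← hlogk_def]
      linarith [hmul]
    have hpow : (l:ℝ) ^ q.den = (k:ℝ) ^ q.num.toNat := by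
      have h1 : (0:ℝ) < (l:ℝ) ^ q.den := pow_pos hl0 _
      have h2 : (0:ℝ) < (k:ℝ) ^ q.num.toNat := pow_pos hk0 _
      rw [← Real.exp_log h1, ← Real.exp_log h2, hlogeq]
    have hpowN : k ^ q.num.toNat = l ^ q.den := by
      have : ((k ^ q.num.toNat : ℕ) : ℝ) = ((l ^ q.den : ℕ) : ℝ) := by
        push_cast; rw [hpow]
      exact_mod_cast this
    obtain ⟨-, h2⟩ := hmi _ _ hpowN
    exact absurd h2 q.den_ne_zero
  -- the open set of good ratios
  set r0 := v / u with hr0_def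
  have hr0 : 0 < r0 := div_pos hv hu
  set O := {r : ℝ | ∀ p ∈ S, 0 < (p.1:ℝ) + (p.2:ℝ) * r} with hO_def
  have hr0O : r0 ∈ O := by
    intro p hp
    have h1 : 0 < ((p.1:ℝ) * u + (p.2:ℝ) * v) / u := div_pos (husol p hp) hu
    have h2 : ((p.1:ℝ) * u + (p.2:ℝ) * v) / u = (p.1:ℝ) + (p.2:ℝ) * r0 := by
      rw [hr0_def]; field_simp
    rwa [h2] at h1
  have hOopen : IsOpen O := by
    have hO2 : O = ⋂ p ∈ S, {r : ℝ | 0 < (p.1:ℝ) + (p.2:ℝ) * r} := by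
      ext r; simp [hO_def, Set.mem_iInter]
    rw [hO2]
    exact isOpen_biInter_finset fun p _ =>
      isOpen_lt continuous_const (continuous_const.add (continuous_const.mul continuous_id))
  obtain ⟨ε, hε, hball⟩ := Metric.isOpen_iff.mp hOopen r0 hr0O
  set c := max (r0 - ε/2) (r0/2) with hc_def
  set d := r0 + ε/2 with hd_def
  have hc0 : 0 < c := lt_max_of_lt_right (by linarith)
  have hcd : c < d := max_lt (by linarith) (by linarith)
  have hsub : Set.Ioo c d ⊆ O := by
    intro r hr
    apply hball
    rw [Metric.mem_ball, Real.dist_eq, abs_lt]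
    have h1 : r0 - ε/2 ≤ c := le_max_left _ _
    obtain ⟨hrc, hrd⟩ := hr
    have hrd' : r < r0 + ε / 2 := hrd
    have hrc' : r0 - ε / 2 < r := lt_of_le_of_lt h1 hrc
    constructor <;> linarith
  set A := Real.log c with hA_def
  set B := Real.log d with hB_def
  have hABlt : A < B := Real.log_lt_log hc0 hcd
  have hA'B' : A / logk < B / logk := by
    exact div_lt_div_of_pos_right hABlt hlogk
  -- unboundedness of the image
  apply Set.Infinite.of_image Prod.snd
  apply Set.infinite_of_not_bddAbove
  rintro ⟨x, hx⟩
  obtain ⟨N, hN⟩ := pow_unbounded_of_one_lt x hl1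
  obtain ⟨s, t, htN, h1, h2⟩ := key_lemma hirr hα hA'B' N
  have hks : (0:ℝ) < (k:ℝ) ^ s := pow_pos hk0 _
  have hlt : (0:ℝ) < (l:ℝ) ^ t := pow_pos hl0 _
  set r : ℝ := (l:ℝ) ^ t / (k:ℝ) ^ s with hr_def
  have hrpos : 0 < r := div_pos hlt hks
  have hlogr : Real.log r = ((t:ℝ) * α - s) * logk := by
    have hαk : α * logk = logl := div_mul_cancel₀ logl hlogk.ne'
    rw [hr_def, Real.log_div hlt.ne' hks.ne', Real.log_pow, Real.log_pow,
      ← hlogl_def, ← hlogk_def, ← hαk]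
    ring
  have hrIoo : r ∈ Set.Ioo c d := by
    have hA' : A < Real.log r := by
      rw [hlogr]
      calc A = (A / logk) * logk := by field_simp
      _ < ((t:ℝ) * α - s) * logk := by
          exact mul_lt_mul_of_pos_right h1 hlogk
    have hB' : Real.log r < B := by
      rw [hlogr]
      calc ((t:ℝ) * α - s) * logk < (B / logk) * logk :=
          mul_lt_mul_of_pos_right h2 hlogk
      _ = B := by field_simp
    constructor
    · rw [← Real.exp_log hc0, ← Real.exp_log hrpos]
      exact Real.exp_lt_exp.mpr hA'
    · rw [← Real.exp_log hrpos, ← Real.exp_log (lt_trans hc0 hcd)]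
      exact Real.exp_lt_exp.mpr hB'
  have hmem : ((k:ℝ) ^ s, (l:ℝ) ^ t) ∈
      {uv : ℝ × ℝ | (∃ s : ℕ, uv.1 = (k : ℝ) ^ s) ∧ (∃ t : ℕ, uv.2 = (l : ℝ) ^ t) ∧
        ∀ p ∈ S, (p.1 : ℝ) * uv.1 + (p.2 : ℝ) * uv.2 > 0} := by
    refine ⟨⟨s, rfl⟩, ⟨t, rfl⟩, fun p hp => ?_⟩
    have hOr := hsub hrIoo p hp
    have hprod : 0 < ((p.1:ℝ) + (p.2:ℝ) * r) * (k:ℝ) ^ s := mul_pos hOr hks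
    have heq : ((p.1:ℝ) + (p.2:ℝ) * r) * (k:ℝ) ^ s
        = (p.1:ℝ) * (k:ℝ) ^ s + (p.2:ℝ) * (l:ℝ) ^ t := by
      have hrk : r * (k:ℝ) ^ s = (l:ℝ) ^ t := div_mul_cancel₀ _ hks.ne'
      calc ((p.1:ℝ) + (p.2:ℝ) * r) * (k:ℝ) ^ s
          = (p.1:ℝ) * (k:ℝ) ^ s + (p.2:ℝ) * (r * (k:ℝ) ^ s) := by ring
        _ = (p.1:ℝ) * (k:ℝ) ^ s + (p.2:ℝ) * (l:ℝ) ^ t := by rw [hrk]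
    rw [heq] at hprod
    exact hprod
  have hin : (l:ℝ) ^ t ∈ Prod.snd ''
      {uv : ℝ × ℝ | (∃ s : ℕ, uv.1 = (k : ℝ) ^ s) ∧ (∃ t : ℕ, uv.2 = (l : ℝ) ^ t) ∧
        ∀ p ∈ S, (p.1 : ℝ) * uv.1 + (p.2 : ℝ) * uv.2 > 0} :=
    ⟨((k:ℝ) ^ s, (l:ℝ) ^ t), hmem, rfl⟩
  have hle : (l:ℝ) ^ t ≤ x := hx hin
  have hge : (l:ℝ) ^ N ≤ (l:ℝ) ^ t := pow_le_pow_right₀ (by linarith) htN.le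
  linarith
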